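/- There exist a compact metric space X ⊆ [0,1]² and a homeomorphism f : X → X with a fixed point Λ = {(0,0)} such that f|_Λ is expansive, h_top(f|_{Λ_ε}) ≥ log 2 for every ε > 0 where Λ_ε = ⋂_{i∈ℤ} f^i(B_ε(Λ)), and yet Sen(f|_Λ) = ∅. (Construction: X = {(0,0)} ∪ ⋃_{n≥1} {(1/n, y/n) : y ∈ C} with C the Cantor set, f fixing (0,0) and acting on each slice {1/n} × C/n as a conjugate of the full 2-shift.) -/

import Mathlib

open Metric Filter Function Set

variable {X : Type*} [MetricSpace X]

/-- A δ-chain of length ≥ 1 from x to y. -/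
def IsChain' (f : X → X) (δ : ℝ) (x y : X) : Prop :=
  ∃ k : ℕ, 1 ≤ k ∧ ∃ c : ℕ → X, c 0 = x ∧ c k = y ∧ ∀ i < k, dist (f (c i)) (c (i + 1)) ≤ δ

/-- The chain recurrent set. -/
def CR (f : X → X) : Set X := {x | ∀ δ > 0, IsChain' f δ x x}

/-- Sensitive points of f restricted to S. -/
def SenOn (f : X → X) (S : Set X) : Set X :=
  {x | x ∈ S ∧ ∃ a > 0, ∀ δ > 0, ∃ y ∈ S, dist x y ≤ δ ∧ ∃ i : ℕ, a < dist (f^[i] x) (f^[i] y)}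

/-- Equicontinuity of a map (uniform over all forward iterates). -/
def Equicont (f : X → X) : Prop :=
  ∀ ε > 0, ∃ δ > 0, ∀ z w : X, dist z w ≤ δ → ∀ i : ℕ, dist (f^[i] z) (f^[i] w) ≤ ε

/-- The i-th iterate (i ∈ ℤ) of a homeomorphism. -/
def ziter (f : X ≃ₜ X) (i : ℤ) : X → X :=
  fun x => if 0 ≤ i then (⇑f)^[i.toNat] x else (⇑f.symm)^[(-i).toNat] x

/-- Expansiveness of a homeomorphism. -/
def Expansive (f : X ≃ₜ X) : Prop :=
  ∃ e > 0, ∀ x y : X, (∀ i : ℤ, dist (ziter f i x) (ziter f i y) ≤ e) → x = y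

/-- e is an expansive constant for f on S. -/
def ExpConstOn (f : X ≃ₜ X) (S : Set X) (e : ℝ) : Prop :=
  ∀ x y : X, (∀ i : ℤ, ziter f i x ∈ S) → (∀ i : ℤ, ziter f i y ∈ S) →
    (∀ i : ℤ, dist (ziter f i x) (ziter f i y) ≤ e) → x = y

/-- Periodic points. -/
def Per (f : X → X) : Set X := {x | ∃ j : ℕ, 1 ≤ j ∧ f^[j] x = x}

/-- Closed r-neighborhood of a set. -/
def nbd (r : ℝ) (S : Set X) : Set X := {y | infDist y S ≤ r}

/-- Maximal cardinality of an (n,r)-separated subset of K. -/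
noncomputable def sepNum (f : X → X) (K : Set X) (n : ℕ) (r : ℝ) : ℕ :=
  sSup {N : ℕ | ∃ E : Finset X, (E : Set X) ⊆ K ∧ E.card = N ∧
    ∀ x ∈ E, ∀ y ∈ E, x ≠ y → ∃ i < n, r < dist (f^[i] x) (f^[i] y)}

noncomputable def entAt (f : X → X) (K : Set X) (r : ℝ) : ℝ :=
  Filter.limsup (fun n : ℕ => Real.log (sepNum f K n r) / n) Filter.atTop

/-- Topological entropy of f on K (via (n,r)-separated sets). -/
noncomputable def htop (f : X → X) (K : Set X) : ℝ :=
  ⨆ r : {r : ℝ // 0 < r}, entAt f K r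

namespace St17


def enc (j : ℤ) : ℕ := if 0 ≤ j then 2 * j.toNat else 2 * (-j).toNat - 1

lemma enc_inj : Function.Injective enc := by
  intro a b h; unfold enc at h; split at h <;> split at h <;> omega

lemma enc_zero : enc 0 = 0 := rfl

lemma enc_add_one (j : ℤ) : enc (j + 1) ≤ enc j + 2 := by
  unfold enc; split <;> split <;> omega

lemma enc_sub_one (j : ℤ) : enc (j - 1) ≤ enc j + 2 := by
  unfold enc; split <;> split <;> omega

noncomputable def w (n : ℕ) : ℝ := 2 * (3:ℝ)⁻¹ ^ (n + 1)

lemma w_nonneg (n : ℕ) : 0 ≤ w n := by unfold w; positivity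

lemma summable_w : Summable w := by
  have h : Summable (fun n : ℕ => (3:ℝ)⁻¹ ^ n) :=
    summable_geometric_of_lt_one (by norm_num) (by norm_num)
  refine (h.mul_left (2 * 3⁻¹)).congr fun n => ?_
  simp [w, pow_succ]; ring

lemma summable_w_ite (M : ℕ) : Summable (fun n : ℕ => if M ≤ n then w n else 0) := by
  refine Summable.of_nonneg_of_le (fun n => ?_) (fun n => ?_) summable_w
  · split
    · exact w_nonneg n
    · exact le_rfl
  · split
    · exact le_rfl
    · exact w_nonneg n

lemma tsum_w_tail (M : ℕ) : ∑' n : ℕ, (if M ≤ n then w n else 0) = (3:ℝ)⁻¹ ^ M := by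
  rw [← Summable.sum_add_tsum_nat_add M (summable_w_ite M)]
  have h1 : (∑ i ∈ Finset.range M, if M ≤ i then w i else 0) = 0 := by
    refine Finset.sum_eq_zero fun i hi => ?_
    have := Finset.mem_range.mp hi
    rw [if_neg (by omega)]
  have h2 : (fun n : ℕ => if M ≤ n + M then w (n + M) else 0)
      = fun n : ℕ => (2 * (3:ℝ)⁻¹ ^ (M + 1)) * (3:ℝ)⁻¹ ^ n := by
    funext n
    rw [if_pos (Nat.le_add_left M n)]
    unfold w
    rw [show n + M + 1 = (M + 1) + n by omega, pow_add]
    ring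
  rw [h1, zero_add, h2, tsum_mul_left,
    tsum_geometric_of_lt_one (by norm_num) (by norm_num)]
  rw [pow_succ]
  ring_nf

noncomputable def d (s : ℤ → Bool) (j : ℤ) : ℝ :=
  (if s j then (2:ℝ) else 0) * (3:ℝ)⁻¹ ^ (enc j + 1)

lemma d_nonneg (s : ℤ → Bool) (j : ℤ) : 0 ≤ d s j := by
  unfold d; split
  · positivity
  · rw [zero_mul]

lemma d_le_w (s : ℤ → Bool) (j : ℤ) : d s j ≤ w (enc j) := by
  unfold d w; split
  · exact le_rfl
  · rw [zero_mul]; positivity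

lemma summable_wenc : Summable (fun j : ℤ => w (enc j)) :=
  summable_w.comp_injective enc_inj

lemma summable_d (s : ℤ → Bool) : Summable (d s) :=
  Summable.of_nonneg_of_le (d_nonneg s) (d_le_w s) summable_wenc

lemma abs_d_sub_le (s t : ℤ → Bool) (j : ℤ) : |d s j - d t j| ≤ w (enc j) := by
  have h1 := d_nonneg s j; have h2 := d_nonneg t j
  have h3 := d_le_w s j; have h4 := d_le_w t j
  rw [abs_sub_le_iff]; constructor <;> linarith

lemma summable_absd (s t : ℤ → Bool) : Summable (fun j => |d s j - d t j|) :=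
  Summable.of_nonneg_of_le (fun j => abs_nonneg _) (abs_d_sub_le s t) summable_wenc

noncomputable def e (s : ℤ → Bool) : ℝ := ∑' j, d s j

lemma e_nonneg (s : ℤ → Bool) : 0 ≤ e s := tsum_nonneg (d_nonneg s)

lemma e_sub_eq (s t : ℤ → Bool) : e s - e t = ∑' j, (d s j - d t j) :=
  (Summable.tsum_sub (summable_d s) (summable_d t)).symm

lemma e_le_one (s : ℤ → Bool) : e s ≤ 1 := by
  have h1 : e s ≤ ∑' j : ℤ, w (enc j) :=
    Summable.tsum_le_tsum (d_le_w s) (summable_d s) summable_wenc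
  have h2 : ∑' j : ℤ, w (enc j) ≤ ∑' n : ℕ, w n :=
    Summable.tsum_le_tsum_of_inj enc enc_inj (fun c _ => w_nonneg c) (fun j => le_rfl)
      summable_wenc summable_w
  have h3 : ∑' n : ℕ, w n = 1 := by
    have h := tsum_w_tail 0
    simpa using h
  linarith

lemma e_dist_le {s t : ℤ → Bool} (M : ℕ) (h : ∀ j, s j ≠ t j → M ≤ enc j) :
    |e s - e t| ≤ (3:ℝ)⁻¹ ^ M := by
  have hn : Summable (fun j => ‖d s j - d t j‖) := by
    simpa [Real.norm_eq_abs] using summable_absd s t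
  have h1 : |e s - e t| ≤ ∑' j, |d s j - d t j| := by
    rw [e_sub_eq]
    have h1' := norm_tsum_le_tsum_norm hn
    simpa [Real.norm_eq_abs] using h1'
  have hb : ∀ j, |d s j - d t j| ≤ (if M ≤ enc j then w (enc j) else 0) := by
    intro j
    by_cases hj : s j = t j
    · have : d s j = d t j := by unfold d; rw [hj]
      rw [this, sub_self, abs_zero]
      split
      · exact w_nonneg _
      · exact le_rfl
    · rw [if_pos (h j hj)]; exact abs_d_sub_le s t j
  have hsum2 : Summable (fun j : ℤ => if M ≤ enc j then w (enc j) else 0) :=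
    (summable_w_ite M).comp_injective enc_inj
  have h2 : ∑' j, |d s j - d t j| ≤ ∑' j : ℤ, (if M ≤ enc j then w (enc j) else 0) :=
    Summable.tsum_le_tsum hb (summable_absd s t) hsum2
  have h3 : ∑' j : ℤ, (if M ≤ enc j then w (enc j) else 0)
      ≤ ∑' n : ℕ, (if M ≤ n then w n else 0) := by
    refine Summable.tsum_le_tsum_of_inj enc enc_inj (fun c _ => ?_) (fun j => le_rfl)
      hsum2 (summable_w_ite M)
    split
    · exact w_nonneg c
    · exact le_rfl
  calc |e s - e t| ≤ ∑' j, |d s j - d t j| := h1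
    _ ≤ _ := h2
    _ ≤ _ := h3
    _ = _ := tsum_w_tail M

lemma e_sub_single {s t : ℤ → Bool} (j0 : ℤ) (h : ∀ j, j ≠ j0 → s j = t j) :
    e s - e t = d s j0 - d t j0 := by
  rw [e_sub_eq]
  refine tsum_eq_single j0 (fun b hb => ?_)
  unfold d; rw [h b hb]; ring

lemma e_dist_ge {s t : ℤ → Bool} {m : ℕ} {j0 : ℤ} (henc : enc j0 = m)
    (hne : s j0 ≠ t j0) (h : ∀ j, s j ≠ t j → m ≤ enc j) :
    (3:ℝ)⁻¹ ^ (m + 1) ≤ |e s - e t| := by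
  set u := Function.update s j0 (t j0) with hu
  have hu_j0 : u j0 = t j0 := Function.update_self j0 (t j0) s
  have hu_ne : ∀ j, j ≠ j0 → u j = s j := fun j hj => Function.update_of_ne hj _ _
  have h1 : e s - e u = d s j0 - d t j0 := by
    have h1' := e_sub_single (s := s) (t := u) j0 (fun j hj => (hu_ne j hj).symm)
    rw [h1']
    unfold d
    rw [hu_j0]
  have habs : |d s j0 - d t j0| = 2 * (3:ℝ)⁻¹ ^ (m + 1) := by
    have hpos : (0:ℝ) ≤ 2 * (3:ℝ)⁻¹ ^ (m + 1) := by positivity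
    unfold d
    rw [henc]
    cases hs : s j0 <;> cases ht : t j0
    · exact absurd (by rw [hs, ht]) hne
    · norm_num
    · norm_num
    · exact absurd (by rw [hs, ht]) hne
  have h2 : |e u - e t| ≤ (3:ℝ)⁻¹ ^ (m + 1) := by
    refine e_dist_le (m + 1) fun j hj => ?_
    have hjne : j ≠ j0 := fun hh => by rw [hh, hu_j0] at hj; exact hj rfl
    have hst : s j ≠ t j := by rw [← hu_ne j hjne]; exact hj
    have h3 := h j hst
    rcases Nat.lt_or_ge m (enc j) with hlt | hge
    · omega
    · have hej : enc j = enc j0 := by omega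
      exact absurd (enc_inj hej) hjne
  have key : |e s - e u| - |e u - e t| ≤ |e s - e t| := by
    calc |e s - e u| - |e u - e t| = |e s - e u| - |-(e u - e t)| := by rw [abs_neg]
      _ ≤ |(e s - e u) - -(e u - e t)| := abs_sub_abs_le_abs_sub _ _
      _ = |e s - e t| := by ring_nf
  rw [h1, habs] at key
  linarith



lemma exists_min {s t : ℤ → Bool} (hst : s ≠ t) :
    ∃ (m : ℕ) (j0 : ℤ), enc j0 = m ∧ s j0 ≠ t j0 ∧ ∀ j, s j ≠ t j → m ≤ enc j := by
  have hA : ∃ n : ℕ, ∃ j : ℤ, enc j = n ∧ s j ≠ t j := by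
    obtain ⟨j, hj⟩ := Function.ne_iff.mp hst
    exact ⟨enc j, j, rfl, hj⟩
  classical
  obtain ⟨j0, hj0, hj0'⟩ := Nat.find_spec hA
  refine ⟨Nat.find hA, j0, hj0, hj0', fun j hj => ?_⟩
  exact Nat.find_min' hA ⟨j, rfl, hj⟩

lemma e_lower {s t : ℤ → Bool} (hst : s ≠ t) :
    ∃ m : ℕ, (∀ j, s j ≠ t j → m ≤ enc j) ∧ (3:ℝ)⁻¹ ^ (m + 1) ≤ |e s - e t| := by
  obtain ⟨m, j0, h1, h2, h3⟩ := exists_min hst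
  exact ⟨m, h3, e_dist_ge h1 h2 h3⟩

lemma e_inj : Function.Injective e := by
  intro s t h
  by_contra hst
  obtain ⟨m, _, hge⟩ := e_lower hst
  rw [h, sub_self, abs_zero] at hge
  have : (0:ℝ) < (3:ℝ)⁻¹ ^ (m + 1) := by positivity
  linarith

lemma e_sep {s t : ℤ → Bool} (h : s 0 ≠ t 0) : (3:ℝ)⁻¹ ≤ |e s - e t| := by
  have := e_dist_ge (m := 0) (j0 := 0) rfl h (fun j _ => Nat.zero_le _)
  simpa using this

def σf (s : ℤ → Bool) : ℤ → Bool := fun j => s (j + 1)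
def σb (s : ℤ → Bool) : ℤ → Bool := fun j => s (j - 1)

lemma σb_σf (s : ℤ → Bool) : σb (σf s) = s := by
  funext j; unfold σf σb; norm_num

lemma σf_σb (s : ℤ → Bool) : σf (σb s) = s := by
  funext j; unfold σf σb; norm_num

lemma pow_third_le (m : ℕ) : ((3:ℝ)⁻¹) ^ (m - 2) ≤ 27 * ((3:ℝ)⁻¹) ^ (m + 1) := by
  have h1 : ((3:ℝ)⁻¹) ^ (m - 2) = 27 * ((3:ℝ)⁻¹) ^ ((m - 2) + 3) := by
    rw [pow_add]; norm_num; ring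
  rw [h1]
  have h2 : ((3:ℝ)⁻¹) ^ ((m-2) + 3) ≤ ((3:ℝ)⁻¹) ^ (m + 1) := by
    apply pow_le_pow_of_le_one (by norm_num) (by norm_num)
    omega
  linarith

lemma e_shift_lip (τ : (ℤ → Bool) → (ℤ → Bool))
    (hτ : ∀ s t j, τ s j ≠ τ t j → ∃ j', s j' ≠ t j' ∧ enc j' ≤ enc j + 2)
    (s t : ℤ → Bool) : |e (τ s) - e (τ t)| ≤ 27 * |e s - e t| := by
  by_cases hst : s = t
  · rw [hst, sub_self, abs_zero]; positivity
  obtain ⟨m, hmin, hge⟩ := e_lower hst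
  have hτle : |e (τ s) - e (τ t)| ≤ (3:ℝ)⁻¹ ^ (m - 2) := by
    refine e_dist_le (m - 2) fun j hj => ?_
    obtain ⟨j', hj', hle⟩ := hτ s t j hj
    have := hmin j' hj'
    omega
  calc |e (τ s) - e (τ t)| ≤ (3:ℝ)⁻¹ ^ (m - 2) := hτle
    _ ≤ 27 * (3:ℝ)⁻¹ ^ (m + 1) := pow_third_le m
    _ ≤ 27 * |e s - e t| := by linarith

lemma e_σf_lip (s t : ℤ → Bool) : |e (σf s) - e (σf t)| ≤ 27 * |e s - e t| := by
  refine e_shift_lip σf (fun s t j hj => ⟨j + 1, hj, enc_add_one j⟩) s t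

lemma e_σb_lip (s t : ℤ → Bool) : |e (σb s) - e (σb t)| ≤ 27 * |e s - e t| := by
  refine e_shift_lip σb (fun s t j hj => ⟨j - 1, hj, enc_sub_one j⟩) s t


lemma e_continuous : Continuous e := by
  refine continuous_tsum (f := fun j (s : ℤ → Bool) => d s j)
    (fun j => ?_) (summable_w.comp_injective enc_inj) (fun j s => ?_)
  · have h1 : Continuous fun s : ℤ → Bool => (if s j then (2:ℝ) else 0) :=
      Continuous.comp (continuous_of_discreteTopology
        (f := fun b : Bool => if b then (2:ℝ) else 0)) (continuous_apply j)
    exact h1.mul continuous_const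
  · rw [Real.norm_eq_abs, abs_of_nonneg (d_nonneg s j)]
    exact d_le_w s j



noncomputable def slicePt (n : ℕ) (s : ℤ → Bool) : ℝ × ℝ :=
  (((n:ℝ) + 1)⁻¹, e s * ((n:ℝ) + 1)⁻¹)

def XsSet : Set (ℝ × ℝ) := insert ((0:ℝ), (0:ℝ)) {p | ∃ n s, p = slicePt n s}

lemma inv_pos' (n : ℕ) : (0:ℝ) < ((n:ℝ) + 1)⁻¹ := by positivity

lemma slicePt_fst (n : ℕ) (s : ℤ → Bool) : (slicePt n s).1 = ((n:ℝ) + 1)⁻¹ := rfl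

lemma slicePt_ne_zero (n : ℕ) (s : ℤ → Bool) : slicePt n s ≠ ((0:ℝ), (0:ℝ)) := by
  intro h
  have := congrArg Prod.fst h
  simp only [slicePt] at this
  exact absurd this (by positivity)

lemma origin_mem : ((0:ℝ), (0:ℝ)) ∈ XsSet := Set.mem_insert _ _

lemma slicePt_mem (n : ℕ) (s : ℤ → Bool) : slicePt n s ∈ XsSet :=
  Set.mem_insert_iff.mpr (Or.inr ⟨n, s, rfl⟩)

lemma Xs_cases {p : ℝ × ℝ} (hp : p ∈ XsSet) :
    p = ((0:ℝ), (0:ℝ)) ∨ ∃ n s, p = slicePt n s := Set.mem_insert_iff.mp hp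

lemma Xs_subset_Icc : XsSet ⊆ Set.Icc ((0:ℝ), (0:ℝ)) (1, 1) := by
  rintro p hp
  rcases Xs_cases hp with rfl | ⟨n, s, rfl⟩
  · constructor <;> constructor <;> norm_num
  · have h1 := inv_pos' n
    have h2 : ((n:ℝ) + 1)⁻¹ ≤ 1 := by
      rw [inv_le_one_iff₀]; right; simp
    have h3 := e_nonneg s
    have h4 := e_le_one s
    constructor <;> constructor <;> simp only [slicePt] <;> nlinarith

lemma Xs_compact : IsCompact XsSet := by
  have hD1 : IsCompact (insert (0:ℝ) (Set.range fun n : ℕ => ((n:ℝ) + 1)⁻¹)) := by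
    apply Filter.Tendsto.isCompact_insert_range
    have := tendsto_one_div_add_atTop_nhds_zero_nat (𝕜 := ℝ)
    simpa [one_div] using this
  have hD : IsCompact ((insert (0:ℝ) (Set.range fun n : ℕ => ((n:ℝ) + 1)⁻¹)) ×ˢ
      (Set.univ : Set (ℤ → Bool))) := hD1.prod isCompact_univ
  have hΦ : Continuous (fun q : ℝ × (ℤ → Bool) => (q.1, e q.2 * q.1)) :=
    continuous_fst.prodMk ((e_continuous.comp continuous_snd).mul continuous_fst)
  have himg : (fun q : ℝ × (ℤ → Bool) => (q.1, e q.2 * q.1)) ''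
      ((insert (0:ℝ) (Set.range fun n : ℕ => ((n:ℝ) + 1)⁻¹)) ×ˢ Set.univ) = XsSet := by
    ext p
    constructor
    · rintro ⟨⟨a, s⟩, ⟨ha, -⟩, rfl⟩
      rcases Set.mem_insert_iff.mp ha with rfl | ⟨n, rfl⟩
      · simp only [mul_zero]
        exact origin_mem
      · exact slicePt_mem n s
    · intro hp
      rcases Xs_cases hp with rfl | ⟨n, s, rfl⟩
      · exact ⟨(0, fun _ => false), ⟨Set.mem_insert _ _, trivial⟩, by simp⟩
      · exact ⟨(((n:ℝ) + 1)⁻¹, s), ⟨Set.mem_insert_iff.mpr (Or.inr ⟨n, rfl⟩), trivial⟩, rfl⟩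
  rw [← himg]
  exact hD.image hΦ

open Classical in
noncomputable def eInv (y : ℝ) : ℤ → Bool :=
  if h : ∃ s, e s = y then h.choose else fun _ => false

lemma eInv_e (s : ℤ → Bool) : eInv (e s) = s := by
  have h : ∃ s', e s' = e s := ⟨s, rfl⟩
  rw [eInv, dif_pos h]
  exact e_inj h.choose_spec

noncomputable def fmap (p : ℝ × ℝ) : ℝ × ℝ :=
  if p.1 = 0 then ((0:ℝ), (0:ℝ)) else (p.1, e (σf (eInv (p.2 / p.1))) * p.1)

noncomputable def gmap (p : ℝ × ℝ) : ℝ × ℝ :=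
  if p.1 = 0 then ((0:ℝ), (0:ℝ)) else (p.1, e (σb (eInv (p.2 / p.1))) * p.1)

lemma fmap_zero : fmap ((0:ℝ), (0:ℝ)) = ((0:ℝ), (0:ℝ)) := by simp [fmap]
lemma gmap_zero : gmap ((0:ℝ), (0:ℝ)) = ((0:ℝ), (0:ℝ)) := by simp [gmap]

lemma fmap_slice (n : ℕ) (s : ℤ → Bool) : fmap (slicePt n s) = slicePt n (σf s) := by
  have h1 : ((n:ℝ) + 1)⁻¹ ≠ 0 := ne_of_gt (inv_pos' n)
  have h2 : (slicePt n s).2 / (slicePt n s).1 = e s := by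
    simp only [slicePt]
    field_simp
  unfold fmap
  rw [if_neg (by rw [slicePt_fst]; exact h1), h2, eInv_e]
  rfl

lemma gmap_slice (n : ℕ) (s : ℤ → Bool) : gmap (slicePt n s) = slicePt n (σb s) := by
  have h1 : ((n:ℝ) + 1)⁻¹ ≠ 0 := ne_of_gt (inv_pos' n)
  have h2 : (slicePt n s).2 / (slicePt n s).1 = e s := by
    simp only [slicePt]
    field_simp
  unfold gmap
  rw [if_neg (by rw [slicePt_fst]; exact h1), h2, eInv_e]
  rfl

lemma fmap_mem {p : ℝ × ℝ} (hp : p ∈ XsSet) : fmap p ∈ XsSet := by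
  rcases Xs_cases hp with rfl | ⟨n, s, rfl⟩
  · rw [fmap_zero]; exact origin_mem
  · rw [fmap_slice]; exact slicePt_mem _ _

lemma gmap_mem {p : ℝ × ℝ} (hp : p ∈ XsSet) : gmap p ∈ XsSet := by
  rcases Xs_cases hp with rfl | ⟨n, s, rfl⟩
  · rw [gmap_zero]; exact origin_mem
  · rw [gmap_slice]; exact slicePt_mem _ _

lemma gmap_fmap {p : ℝ × ℝ} (hp : p ∈ XsSet) : gmap (fmap p) = p := by
  rcases Xs_cases hp with rfl | ⟨n, s, rfl⟩
  · rw [fmap_zero, gmap_zero]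
  · rw [fmap_slice, gmap_slice, σb_σf]

lemma fmap_gmap {p : ℝ × ℝ} (hp : p ∈ XsSet) : fmap (gmap p) = p := by
  rcases Xs_cases hp with rfl | ⟨n, s, rfl⟩
  · rw [gmap_zero, fmap_zero]
  · rw [gmap_slice, fmap_slice, σf_σb]

lemma dist_zero_slice (n : ℕ) (s : ℤ → Bool) :
    dist (((0:ℝ), (0:ℝ)) : ℝ × ℝ) (slicePt n s) = ((n:ℝ) + 1)⁻¹ := by
  have h1 := inv_pos' n
  have h3 := e_nonneg s
  have h4 := e_le_one s
  rw [Prod.dist_eq]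
  simp only [slicePt, Real.dist_eq, zero_sub, abs_neg]
  rw [abs_of_nonneg (le_of_lt h1), abs_of_nonneg (by positivity)]
  exact max_eq_left (by nlinarith)

lemma fmap_lip {p q : ℝ × ℝ} (hp : p ∈ XsSet) (hq : q ∈ XsSet) :
    dist (fmap p) (fmap q) ≤ 55 * dist p q := by
  have hd : (0:ℝ) ≤ dist p q := dist_nonneg
  rcases Xs_cases hp with rfl | ⟨n, s, rfl⟩ <;> rcases Xs_cases hq with rfl | ⟨m, t, rfl⟩
  · rw [fmap_zero]
    simp [dist_self]
  · rw [fmap_zero, fmap_slice, dist_zero_slice, dist_zero_slice]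
    linarith [inv_pos' m]
  · rw [fmap_zero, fmap_slice, dist_comm, dist_zero_slice, dist_comm (slicePt n s), dist_zero_slice]
    linarith [inv_pos' n]
  · rw [fmap_slice, fmap_slice]
    set a := ((n:ℝ) + 1)⁻¹ with ha
    set b := ((m:ℝ) + 1)⁻¹ with hb
    have hD1 : dist a b ≤ dist (slicePt n s) (slicePt m t) := by
      rw [Prod.dist_eq]; exact le_max_left _ _
    have hD2 : dist (e s * a) (e t * b) ≤ dist (slicePt n s) (slicePt m t) := by
      rw [Prod.dist_eq]; exact le_max_right _ _
    set D := dist (slicePt n s) (slicePt m t) with hD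
    rw [Prod.dist_eq]
    apply max_le
    · calc dist a b ≤ D := hD1
        _ ≤ 55 * D := by linarith [dist_nonneg (x := slicePt n s) (y := slicePt m t)]
    · have h0 : (0:ℝ) ≤ D := dist_nonneg
      have ha0 : (0:ℝ) < a := inv_pos' n
      have hb0 : (0:ℝ) < b := inv_pos' m
      have het : |e t| ≤ 1 := by
        rw [abs_of_nonneg (e_nonneg t)]; exact e_le_one t
      have heσt : |e (σf t)| ≤ 1 := by
        rw [abs_of_nonneg (e_nonneg _)]; exact e_le_one _
      have key1 : |e s - e t| * a ≤ 2 * D := by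
        have : |e s * a - e t * a| ≤ |e s * a - e t * b| + |e t * b - e t * a| := by
          calc |e s * a - e t * a| = |(e s * a - e t * b) + (e t * b - e t * a)| := by
                congr 1; ring
            _ ≤ _ := abs_add_le _ _
        have h5 : |e s * a - e t * b| ≤ D := by rw [← Real.dist_eq]; exact hD2
        have h6 : |e t * b - e t * a| = |e t| * |b - a| := by rw [← mul_sub, abs_mul]
        have h7 : |b - a| ≤ D := by rw [abs_sub_comm, ← Real.dist_eq]; exact hD1
        have h8 : |e t| * |b - a| ≤ 1 * D :=
          mul_le_mul het h7 (abs_nonneg _) (by norm_num)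
        have h9 : |e s * a - e t * a| = |e s - e t| * a := by
          rw [← sub_mul, abs_mul, abs_of_nonneg ha0.le]
        rw [← h9]
        linarith
      have key2 : |e (σf s) * a - e (σf t) * b| ≤ 55 * D := by
        have hs1 : |e (σf s) * a - e (σf t) * b|
            ≤ |e (σf s) - e (σf t)| * a + |a - b| * |e (σf t)| := by
          calc |e (σf s) * a - e (σf t) * b|
              = |(e (σf s) - e (σf t)) * a + (a - b) * e (σf t)| := by congr 1; ring
            _ ≤ |(e (σf s) - e (σf t)) * a| + |(a - b) * e (σf t)| := abs_add_le _ _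
            _ = |e (σf s) - e (σf t)| * a + |a - b| * |e (σf t)| := by
                rw [abs_mul, abs_mul, abs_of_nonneg ha0.le]
        have hs2 : |e (σf s) - e (σf t)| * a ≤ 27 * (|e s - e t| * a) := by
          have := e_σf_lip s t
          nlinarith
        have hs3 : |a - b| ≤ D := by rw [← Real.dist_eq]; exact hD1
        have hs4 : |a - b| * |e (σf t)| ≤ D * 1 :=
          mul_le_mul hs3 heσt (abs_nonneg _) h0
        nlinarith
      rw [Real.dist_eq]
      exact key2



noncomputable def F : ↥XsSet ≃ ↥XsSet where
  toFun x := ⟨fmap x, fmap_mem x.2⟩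
  invFun x := ⟨gmap x, gmap_mem x.2⟩
  left_inv x := Subtype.ext (gmap_fmap x.2)
  right_inv x := Subtype.ext (fmap_gmap x.2)

lemma F_continuous : Continuous (F : ↥XsSet → ↥XsSet) := by
  rw [Metric.continuous_iff]
  intro x ε hε
  refine ⟨ε / 55, by positivity, fun y hy => ?_⟩
  have h1 : dist (F y) (F x) = dist (fmap ↑y) (fmap ↑x) := rfl
  have h2 : dist y x = dist (y : ℝ × ℝ) (x : ℝ × ℝ) := rfl
  rw [h1]
  calc dist (fmap ↑y) (fmap ↑x) ≤ 55 * dist (y : ℝ × ℝ) (x : ℝ × ℝ) := fmap_lip y.2 x.2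
    _ < 55 * (ε / 55) := by rw [← h2]; linarith
    _ = ε := by ring

noncomputable instance : CompactSpace ↥XsSet := isCompact_iff_compactSpace.mp Xs_compact

noncomputable def fHomeo : ↥XsSet ≃ₜ ↥XsSet := F_continuous.homeoOfEquivCompactToT2

lemma fHomeo_apply (x : ↥XsSet) : (fHomeo x : ℝ × ℝ) = fmap ↑x := rfl
lemma fHomeo_symm_apply (x : ↥XsSet) : (fHomeo.symm x : ℝ × ℝ) = gmap ↑x := rfl

def sliceSet (n : ℕ) : Set ↥XsSet := {x | ∃ s, (x : ℝ × ℝ) = slicePt n s}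

lemma slice_invariant_f (n : ℕ) {x : ↥XsSet} (hx : x ∈ sliceSet n) :
    fHomeo x ∈ sliceSet n := by
  obtain ⟨s, hs⟩ := hx
  exact ⟨σf s, by rw [fHomeo_apply, hs, fmap_slice]⟩

lemma slice_invariant_g (n : ℕ) {x : ↥XsSet} (hx : x ∈ sliceSet n) :
    fHomeo.symm x ∈ sliceSet n := by
  obtain ⟨s, hs⟩ := hx
  exact ⟨σb s, by rw [fHomeo_symm_apply, hs, gmap_slice]⟩

lemma iter_mem {α : Type*} (g : α → α) (S : Set α) (h : ∀ y ∈ S, g y ∈ S) :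
    ∀ (k : ℕ) (x : α), x ∈ S → g^[k] x ∈ S := by
  intro k
  induction k with
  | zero => intro x hx; simpa using hx
  | succ k ih =>
    intro x hx
    rw [Function.iterate_succ_apply']
    exact h _ (ih x hx)

lemma slice_ziter (n : ℕ) {x : ↥XsSet} (hx : x ∈ sliceSet n) (i : ℤ) :
    ziter fHomeo i x ∈ sliceSet n := by
  unfold ziter
  split
  · exact iter_mem _ _ (fun y hy => slice_invariant_f n hy) _ x hx
  · exact iter_mem _ _ (fun y hy => slice_invariant_g n hy) _ x hx

noncomputable def Pt (n : ℕ) (s : ℤ → Bool) : ↥XsSet := ⟨slicePt n s, slicePt_mem n s⟩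

lemma fHomeo_Pt (n : ℕ) (s : ℤ → Bool) : fHomeo (Pt n s) = Pt n (σf s) :=
  Subtype.ext (by rw [fHomeo_apply]; exact fmap_slice n s)

lemma fHomeo_iter_Pt (n : ℕ) (s : ℤ → Bool) (k : ℕ) :
    (⇑fHomeo)^[k] (Pt n s) = Pt n (σf^[k] s) := by
  induction k with
  | zero => rfl
  | succ k ih =>
    rw [Function.iterate_succ_apply', ih, fHomeo_Pt, Function.iterate_succ_apply']

lemma σf_iter (k : ℕ) (s : ℤ → Bool) (j : ℤ) : (σf^[k] s) j = s (j + k) := by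
  induction k generalizing s j with
  | zero => simp
  | succ k ih =>
    rw [Function.iterate_succ_apply, ih]
    unfold σf
    congr 1
    push_cast
    ring



lemma net_bound {Y : Type*} [MetricSpace Y] [CompactSpace Y] {r : ℝ} (hr : 0 < r) :
    ∃ C : ℕ, ∀ (g : Y → Y) (n : ℕ) (E : Finset Y),
      (∀ x ∈ E, ∀ y ∈ E, x ≠ y → ∃ i < n, r < dist (g^[i] x) (g^[i] y)) →
      E.card ≤ C ^ n := by
  obtain ⟨t, -, htfin, hcov⟩ :=
    finite_cover_balls_of_compact (isCompact_univ (X := Y)) (half_pos hr)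
  haveI := htfin.fintype
  have hc : ∀ z : Y, ∃ wc : Y, wc ∈ t ∧ z ∈ ball wc (r / 2) := by
    intro z
    have := hcov (mem_univ z)
    simpa using this
  choose c hct hcb using hc
  refine ⟨Fintype.card ↥t, fun g n E hsep => ?_⟩
  have hinj : Set.InjOn (fun (x : Y) (i : Fin n) => (⟨c (g^[i.1] x), hct _⟩ : ↥t)) ↑E := by
    intro x hx y hy hxy
    by_contra hne
    obtain ⟨i, hi, hd⟩ := hsep x hx y hy hne
    have := congrFun hxy ⟨i, hi⟩
    have hcc : c (g^[i] x) = c (g^[i] y) := congrArg Subtype.val this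
    have d1 : dist (g^[i] x) (c (g^[i] x)) < r / 2 := mem_ball.mp (hcb _)
    have d2 : dist (g^[i] y) (c (g^[i] y)) < r / 2 := mem_ball.mp (hcb _)
    have : dist (g^[i] x) (g^[i] y) ≤
        dist (g^[i] x) (c (g^[i] x)) + dist (c (g^[i] y)) (g^[i] y) := by
      rw [hcc]
      exact dist_triangle _ _ _
    rw [dist_comm (c (g^[i] y))] at this
    linarith
  calc E.card ≤ (Finset.univ : Finset (Fin n → ↥t)).card := by
        apply Finset.card_le_card_of_injOn _ (fun _ _ => Finset.mem_univ _) hinj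
    _ = Fintype.card (Fin n → ↥t) := rfl
    _ = Fintype.card ↥t ^ n := by rw [Fintype.card_fun, Fintype.card_fin]

lemma sepNum_set_nonempty (f : X → X) (K : Set X) (n : ℕ) (r : ℝ) :
    0 ∈ {N : ℕ | ∃ E : Finset X, (E : Set X) ⊆ K ∧ E.card = N ∧
      ∀ x ∈ E, ∀ y ∈ E, x ≠ y → ∃ i < n, r < dist (f^[i] x) (f^[i] y)} := by
  exact ⟨∅, by simp, by simp, by simp⟩

lemma sepNum_le [CompactSpace X] {r : ℝ} (hr : 0 < r) :
    ∃ C : ℕ, ∀ (f : X → X) (K : Set X) (n : ℕ), sepNum f K n r ≤ C ^ n := by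
  obtain ⟨C, hC⟩ := net_bound (Y := X) hr
  refine ⟨C, fun f K n => ?_⟩
  apply csSup_le ⟨0, sepNum_set_nonempty f K n r⟩
  rintro N ⟨E, -, rfl, hsep⟩
  exact hC f n E hsep

lemma sepNum_bddAbove [CompactSpace X] {r : ℝ} (hr : 0 < r) (f : X → X) (K : Set X) (n : ℕ) :
    BddAbove {N : ℕ | ∃ E : Finset X, (E : Set X) ⊆ K ∧ E.card = N ∧
      ∀ x ∈ E, ∀ y ∈ E, x ≠ y → ∃ i < n, r < dist (f^[i] x) (f^[i] y)} := by
  obtain ⟨C, hC⟩ := net_bound (Y := X) hr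
  refine ⟨C ^ n, ?_⟩
  rintro N ⟨E, -, rfl, hsep⟩
  exact hC f n E hsep

lemma sepNum_ge [CompactSpace X] {r : ℝ} (hr : 0 < r) (f : X → X) (K : Set X) (n : ℕ)
    (E : Finset X) (hE : (E : Set X) ⊆ K)
    (hsep : ∀ x ∈ E, ∀ y ∈ E, x ≠ y → ∃ i < n, r < dist (f^[i] x) (f^[i] y)) :
    E.card ≤ sepNum f K n r :=
  le_csSup (sepNum_bddAbove hr f K n) ⟨E, hE, rfl, hsep⟩

lemma log_natCast_nonneg (n : ℕ) : 0 ≤ Real.log n := by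
  rcases Nat.eq_zero_or_pos n with rfl | hn
  · simp
  · apply Real.log_nonneg
    exact_mod_cast hn

lemma entAt_nonneg_fun (f : X → X) (K : Set X) (r : ℝ) (n : ℕ) :
    0 ≤ Real.log (sepNum f K n r) / n := by
  apply div_nonneg (log_natCast_nonneg _) (Nat.cast_nonneg n)

lemma entAt_ge_log (f : X → X) (K : Set X) {r : ℝ} {b : ℝ}
    (hb : ∀ᶠ n : ℕ in atTop, b ≤ Real.log (sepNum f K n r) / n)
    (hub : ∃ B : ℝ, ∀ n : ℕ, Real.log (sepNum f K n r) / n ≤ B) :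
    b ≤ entAt f K r := by
  obtain ⟨B, hB⟩ := hub
  exact Filter.le_limsup_of_frequently_le hb.frequently
    (Filter.isBoundedUnder_of ⟨B, fun n => hB n⟩)

lemma entAt_le (f : X → X) (K : Set X) {r : ℝ} {b : ℝ}
    (hb : ∀ᶠ n : ℕ in atTop, Real.log (sepNum f K n r) / n ≤ b) :
    entAt f K r ≤ b := by
  exact Filter.limsup_le_of_le
    (Filter.isCoboundedUnder_le_of_le atTop (fun n => entAt_nonneg_fun f K r n)) hb



lemma coord_bounds (x : ↥XsSet) :
    0 ≤ (x : ℝ × ℝ).1 ∧ (x : ℝ × ℝ).1 ≤ 1 ∧ 0 ≤ (x : ℝ × ℝ).2 ∧ (x : ℝ × ℝ).2 ≤ 1 := by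
  have h := Xs_subset_Icc x.2
  obtain ⟨h1, h2⟩ := h
  rw [Prod.le_def] at h1 h2
  exact ⟨h1.1, h2.1, h1.2, h2.2⟩

lemma floor_close {δ u v : ℝ} (hδ : 0 < δ) (hu : 0 ≤ u) (hv : 0 ≤ v)
    (h : (⌊u/δ⌋).toNat = (⌊v/δ⌋).toNat) : |u - v| < δ := by
  have hu' : (0:ℤ) ≤ ⌊u/δ⌋ := Int.floor_nonneg.mpr (by positivity)
  have hv' : (0:ℤ) ≤ ⌊v/δ⌋ := Int.floor_nonneg.mpr (by positivity)
  have h1 : ⌊u/δ⌋ = ⌊v/δ⌋ := by omega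
  have a1 : u/δ < ⌊u/δ⌋ + 1 := Int.lt_floor_add_one _
  have a2 : v/δ < ⌊v/δ⌋ + 1 := Int.lt_floor_add_one _
  have b1 : (⌊u/δ⌋:ℝ) ≤ u/δ := Int.floor_le _
  have b2 : (⌊v/δ⌋:ℝ) ≤ v/δ := Int.floor_le _
  have hc : (⌊u/δ⌋:ℝ) = (⌊v/δ⌋:ℝ) := by exact_mod_cast h1
  have d1 : u/δ - v/δ < 1 := by linarith
  have d2 : v/δ - u/δ < 1 := by linarith
  have e1 : (u - v)/δ < 1 := by rw [sub_div]; exact d1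
  have e2 : (v - u)/δ < 1 := by rw [sub_div]; exact d2
  rw [abs_sub_lt_iff]
  constructor
  · exact (div_lt_one hδ).mp e1
  · exact (div_lt_one hδ).mp e2

lemma grid_card {δ : ℝ} (hδ : 0 < δ) (E : Finset ↥XsSet)
    (h : ∀ x ∈ E, ∀ y ∈ E, x ≠ y → δ < dist x y) :
    E.card ≤ ((⌊1/δ⌋).toNat + 1) ^ 2 := by
  set M := (⌊1/δ⌋).toNat with hM
  have hmem : ∀ x : ↥XsSet, ∀ u : ℝ, 0 ≤ u → u ≤ 1 → (⌊u/δ⌋).toNat ∈ Finset.range (M + 1) := by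
    intro x u hu hu1
    rw [Finset.mem_range]
    have h1 : ⌊u/δ⌋ ≤ ⌊1/δ⌋ := Int.floor_le_floor (by gcongr)
    have := Int.toNat_le_toNat h1
    omega
  have hinj : Set.InjOn (fun x : ↥XsSet =>
      ((⌊(x : ℝ × ℝ).1/δ⌋).toNat, (⌊(x : ℝ × ℝ).2/δ⌋).toNat)) ↑E := by
    intro x hx y hy hxy
    by_contra hne
    have hd := h x hx y hy hne
    obtain ⟨hx1, hx2, hx3, hx4⟩ := coord_bounds x
    obtain ⟨hy1, hy2, hy3, hy4⟩ := coord_bounds y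
    have f1 : |(x : ℝ × ℝ).1 - (y : ℝ × ℝ).1| < δ :=
      floor_close hδ hx1 hy1 (congrArg Prod.fst hxy)
    have f2 : |(x : ℝ × ℝ).2 - (y : ℝ × ℝ).2| < δ :=
      floor_close hδ hx3 hy3 (congrArg Prod.snd hxy)
    have : dist x y < δ := by
      rw [Subtype.dist_eq, Prod.dist_eq]
      rw [Real.dist_eq, Real.dist_eq]
      exact max_lt f1 f2
    linarith
  calc E.card ≤ ((Finset.range (M+1)) ×ˢ (Finset.range (M+1))).card := by
        apply Finset.card_le_card_of_injOn _ ?_ hinj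
        intro x hx
        rw [Finset.mem_coe, Finset.mem_product]
        obtain ⟨hx1, hx2, hx3, hx4⟩ := coord_bounds x
        exact ⟨hmem x _ hx1 hx2, hmem x _ hx3 hx4⟩
    _ = (M + 1) ^ 2 := by rw [Finset.card_product, Finset.card_range, sq]

lemma fHomeo_lip (x y : ↥XsSet) : dist (fHomeo x) (fHomeo y) ≤ 55 * dist x y := by
  rw [Subtype.dist_eq, Subtype.dist_eq, fHomeo_apply, fHomeo_apply]
  exact fmap_lip x.2 y.2

lemma fHomeo_iter_lip (x y : ↥XsSet) (i : ℕ) :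
    dist ((⇑fHomeo)^[i] x) ((⇑fHomeo)^[i] y) ≤ 55 ^ i * dist x y := by
  induction i with
  | zero => simp
  | succ i ih =>
    rw [Function.iterate_succ_apply', Function.iterate_succ_apply']
    calc dist (fHomeo ((⇑fHomeo)^[i] x)) (fHomeo ((⇑fHomeo)^[i] y))
        ≤ 55 * dist ((⇑fHomeo)^[i] x) ((⇑fHomeo)^[i] y) := fHomeo_lip _ _
      _ ≤ 55 * (55 ^ i * dist x y) := by linarith
      _ = 55 ^ (i + 1) * dist x y := by rw [pow_succ]; ring

lemma log_nat_le {a b : ℕ} (h : a ≤ b) : Real.log a ≤ Real.log b := by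
  rcases Nat.eq_zero_or_pos a with rfl | ha
  · simpa using log_natCast_nonneg b
  · exact Real.log_le_log (by exact_mod_cast ha) (by exact_mod_cast h)

lemma sepNum_grid_bound (K : Set ↥XsSet) {r : ℝ} (hr : 0 < r) (N : ℕ) :
    sepNum (⇑fHomeo) K N r ≤ ((⌊1/(r/55^N)⌋).toNat + 1) ^ 2 := by
  apply csSup_le ⟨0, sepNum_set_nonempty _ K N r⟩
  rintro N' ⟨E, -, rfl, hsep⟩
  have hδ : (0:ℝ) < r / 55 ^ N := by positivity
  apply grid_card hδ E
  intro x hx y hy hne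
  obtain ⟨i, hi, hd⟩ := hsep x hx y hy hne
  have h1 : dist ((⇑fHomeo)^[i] x) ((⇑fHomeo)^[i] y) ≤ 55 ^ i * dist x y :=
    fHomeo_iter_lip x y i
  have h2 : (55:ℝ) ^ i ≤ 55 ^ N := by
    apply pow_le_pow_right₀ (by norm_num) (le_of_lt hi)
  have h3 : r < 55 ^ N * dist x y := by nlinarith [dist_nonneg (x := x) (y := y)]
  rw [div_lt_iff₀ (by positivity : (0:ℝ) < 55 ^ N)]
  linarith

lemma entAt_unif_bound (K : Set ↥XsSet) {r : ℝ} (hr : 0 < r) :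
    entAt (⇑fHomeo) K r ≤ 2 * Real.log 55 + 1 := by
  set c := Real.log (1/r + 1) with hc
  have hc0 : 0 ≤ c := Real.log_nonneg (by nlinarith [one_div_pos.mpr hr])
  apply entAt_le
  rw [Filter.eventually_atTop]
  refine ⟨max 1 ⌈2 * c⌉₊, fun N hN => ?_⟩
  have hN1 : 1 ≤ N := le_trans (le_max_left _ _) hN
  have hNc : 2 * c ≤ N := by
    have := le_trans (le_max_right 1 ⌈2 * c⌉₊) hN
    calc (2:ℝ) * c ≤ ⌈2 * c⌉₊ := Nat.le_ceil _
      _ ≤ N := by exact_mod_cast this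
  have hNpos : (0:ℝ) < N := by exact_mod_cast hN1
  -- bound on the log of sepNum
  have key : Real.log (sepNum (⇑fHomeo) K N r) ≤ 2 * (N * Real.log 55 + c) := by
    have h1 := log_nat_le (sepNum_grid_bound K hr N)
    have h2 : ((((⌊1/(r/55^N)⌋).toNat + 1 : ℕ) : ℝ) ^ 2 : ℝ)
        = ((((⌊1/(r/55^N)⌋).toNat + 1 : ℕ) : ℝ)) ^ 2 := by norm_num
    have h3 : Real.log ((((⌊1/(r/55^N)⌋).toNat + 1 : ℕ)) ^ 2 : ℕ)
        = 2 * Real.log (((⌊1/(r/55^N)⌋).toNat + 1 : ℕ)) := by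
      push_cast
      rw [Real.log_pow]
      push_cast
      ring
    have h4 : (((⌊1/(r/55^N)⌋).toNat + 1 : ℕ) : ℝ) ≤ 55 ^ N / r + 1 := by
      push_cast
      have hnn : (0:ℝ) ≤ 1/(r/55^N) := by positivity
      have : ((⌊1/(r/55^N)⌋).toNat : ℝ) ≤ 1/(r/55^N) := by
        have h0 : (0:ℤ) ≤ ⌊1/(r/55^N)⌋ := Int.floor_nonneg.mpr hnn
        have hcast : ((⌊1/(r/55^N)⌋.toNat : ℕ) : ℝ) = ((⌊1/(r/55^N)⌋ : ℤ) : ℝ) := by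
          exact_mod_cast congrArg (fun z : ℤ => (z : ℝ)) (Int.toNat_of_nonneg h0)
        rw [hcast]
        exact Int.floor_le _
      have heq : 1/(r/55^N) = 55 ^ N / r := by
        rw [one_div_div]
      linarith [heq ▸ this]
    have h5 : Real.log (((⌊1/(r/55^N)⌋).toNat + 1 : ℕ)) ≤ Real.log (55 ^ N / r + 1) :=
      Real.log_le_log (by positivity) h4
    have h6 : (55:ℝ) ^ N / r + 1 ≤ 55 ^ N * (1/r + 1) := by
      have hp : (1:ℝ) ≤ 55 ^ N := one_le_pow₀ (by norm_num)
      rw [mul_add, mul_one, mul_one_div]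
      linarith
    have h7 : Real.log (55 ^ N / r + 1) ≤ Real.log ((55:ℝ) ^ N * (1/r + 1)) :=
      Real.log_le_log (by positivity) h6
    have h8 : Real.log ((55:ℝ) ^ N * (1/r + 1)) = N * Real.log 55 + c := by
      rw [Real.log_mul (by positivity) (by positivity), Real.log_pow]
    calc Real.log (sepNum (⇑fHomeo) K N r)
        ≤ Real.log ((((⌊1/(r/55^N)⌋).toNat + 1 : ℕ)) ^ 2 : ℕ) := h1
      _ = 2 * Real.log (((⌊1/(r/55^N)⌋).toNat + 1 : ℕ)) := h3
      _ ≤ 2 * (N * Real.log 55 + c) := by linarith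
  have hlog55 : (0:ℝ) ≤ Real.log 55 := Real.log_nonneg (by norm_num)
  rw [div_le_iff₀ hNpos]
  calc Real.log (sepNum (⇑fHomeo) K N r) ≤ 2 * (N * Real.log 55 + c) := key
    _ = 2 * Real.log 55 * N + 2 * c := by ring
    _ ≤ 2 * Real.log 55 * N + N := by linarith
    _ = (2 * Real.log 55 + 1) * N := by ring



def p0 : ↥XsSet := ⟨((0:ℝ), (0:ℝ)), origin_mem⟩

noncomputable def extv {N : ℕ} (v : Fin N → Bool) : ℤ → Bool :=
  fun j => if h : 0 ≤ j ∧ j < N then v ⟨j.toNat, by omega⟩ else false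

lemma extv_coe {N : ℕ} (v : Fin N → Bool) (i : Fin N) : extv v (i : ℤ) = v i := by
  unfold extv
  rw [dif_pos ⟨Int.ofNat_nonneg i.1, by exact_mod_cast i.2⟩]
  congr

lemma extv_inj {N : ℕ} : Function.Injective (extv (N := N)) := by
  intro v w h
  funext i
  have := congrFun h (i : ℤ)
  rwa [extv_coe, extv_coe] at this

lemma Pt_inj (n : ℕ) : Function.Injective (Pt n) := by
  intro s t h
  have h2 : e s * ((n:ℝ) + 1)⁻¹ = e t * ((n:ℝ) + 1)⁻¹ :=
    congrArg (fun x : ↥XsSet => (x : ℝ × ℝ).2) h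
  exact e_inj (mul_right_cancel₀ (ne_of_gt (inv_pos' n)) h2)

lemma dist_Pt_ge (n : ℕ) (s t : ℤ → Bool) (h : s 0 ≠ t 0) :
    (3:ℝ)⁻¹ * ((n:ℝ) + 1)⁻¹ ≤ dist (Pt n s) (Pt n t) := by
  have ha := inv_pos' n
  have h1 : dist (Pt n s) (Pt n t)
      ≥ dist (e s * ((n:ℝ) + 1)⁻¹) (e t * ((n:ℝ) + 1)⁻¹) := by
    rw [Subtype.dist_eq, Prod.dist_eq]
    exact le_max_right _ _
  have h2 : dist (e s * ((n:ℝ) + 1)⁻¹) (e t * ((n:ℝ) + 1)⁻¹)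
      = |e s - e t| * ((n:ℝ) + 1)⁻¹ := by
    rw [Real.dist_eq, ← sub_mul, abs_mul, abs_of_nonneg ha.le]
  have h3 := e_sep h
  have h4 : (3:ℝ)⁻¹ * ((n:ℝ) + 1)⁻¹ ≤ |e s - e t| * ((n:ℝ) + 1)⁻¹ := by
    apply mul_le_mul_of_nonneg_right h3 ha.le
  linarith

lemma sepNum_lower (K : Set ↥XsSet) (n : ℕ) (hK : ∀ s : ℤ → Bool, Pt n s ∈ K) (N : ℕ) :
    2 ^ N ≤ sepNum (⇑fHomeo) K N ((4:ℝ)⁻¹ * ((n:ℝ) + 1)⁻¹) := by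
  classical
  set r := (4:ℝ)⁻¹ * ((n:ℝ) + 1)⁻¹ with hr
  have hrpos : 0 < r := by rw [hr]; positivity
  set E : Finset ↥XsSet :=
    (Finset.univ : Finset (Fin N → Bool)).image (fun v => Pt n (extv v)) with hE
  have hinj : Function.Injective (fun v : Fin N → Bool => Pt n (extv v)) :=
    fun v w h => extv_inj (Pt_inj n h)
  have hcard : E.card = 2 ^ N := by
    rw [hE, Finset.card_image_of_injective _ hinj]
    simp [Fintype.card_fun]
  have hsub : (E : Set ↥XsSet) ⊆ K := by
    intro x hx
    simp only [hE, Finset.coe_image, Set.mem_image] at hx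
    obtain ⟨v, -, rfl⟩ := hx
    exact hK _
  have hsep : ∀ x ∈ E, ∀ y ∈ E, x ≠ y →
      ∃ i < N, r < dist ((⇑fHomeo)^[i] x) ((⇑fHomeo)^[i] y) := by
    intro x hx y hy hxy
    rw [hE, Finset.mem_image] at hx hy
    obtain ⟨v, -, rfl⟩ := hx
    obtain ⟨u, -, rfl⟩ := hy
    have hvu : v ≠ u := fun h => hxy (by rw [h])
    obtain ⟨i, hi⟩ := Function.ne_iff.mp hvu
    refine ⟨i.1, i.2, ?_⟩
    rw [fHomeo_iter_Pt, fHomeo_iter_Pt]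
    have hd : (σf^[i.1] (extv v)) 0 ≠ (σf^[i.1] (extv u)) 0 := by
      rw [σf_iter, σf_iter, zero_add]
      rw [show ((i.1 : ℤ)) = ((i : Fin N) : ℤ) from rfl]
      rw [extv_coe, extv_coe]
      exact hi
    have := dist_Pt_ge n _ _ hd
    have h13 : r < (3:ℝ)⁻¹ * ((n:ℝ) + 1)⁻¹ := by
      rw [hr]
      have := inv_pos' n
      nlinarith
    linarith
  exact le_csSup (sepNum_bddAbove hrpos (⇑fHomeo) K N) ⟨E, hsub, hcard, hsep⟩

lemma entAt_lower (K : Set ↥XsSet) (n : ℕ) (hK : ∀ s : ℤ → Bool, Pt n s ∈ K) :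
    Real.log 2 ≤ entAt (⇑fHomeo) K ((4:ℝ)⁻¹ * ((n:ℝ) + 1)⁻¹) := by
  set r := (4:ℝ)⁻¹ * ((n:ℝ) + 1)⁻¹ with hr
  have hrpos : 0 < r := by rw [hr]; positivity
  apply entAt_ge_log
  · rw [Filter.eventually_atTop]
    refine ⟨1, fun N hN => ?_⟩
    have hNpos : (0:ℝ) < N := by exact_mod_cast hN
    have h1 : (2:ℕ) ^ N ≤ sepNum (⇑fHomeo) K N r := sepNum_lower K n hK N
    have h2 : Real.log ((2:ℕ) ^ N : ℕ) ≤ Real.log (sepNum (⇑fHomeo) K N r) := log_nat_le h1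
    have h3 : Real.log ((2:ℕ) ^ N : ℕ) = N * Real.log 2 := by
      push_cast
      rw [Real.log_pow]
    rw [le_div_iff₀ hNpos]
    calc Real.log 2 * N = N * Real.log 2 := by ring
      _ = Real.log ((2:ℕ) ^ N : ℕ) := h3.symm
      _ ≤ _ := h2
  · obtain ⟨C, hC⟩ := sepNum_le (X := ↥XsSet) hrpos
    refine ⟨Real.log (max C 1), fun N => ?_⟩
    have hlogC : 0 ≤ Real.log (max C 1) := by
      apply Real.log_nonneg
      have : (1:ℕ) ≤ max C 1 := le_max_right _ _
      exact_mod_cast this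
    rcases Nat.eq_zero_or_pos N with rfl | hN
    · simpa using hlogC
    · have hNpos : (0:ℝ) < N := by exact_mod_cast hN
      rw [div_le_iff₀ hNpos]
      have h1 : sepNum (⇑fHomeo) K N r ≤ (max C 1) ^ N := by
        calc sepNum (⇑fHomeo) K N r ≤ C ^ N := hC _ K N
          _ ≤ (max C 1) ^ N := Nat.pow_le_pow_left (le_max_left _ _) N
      have h2 := log_nat_le h1
      have h3 : Real.log (((max C 1) ^ N : ℕ)) = N * Real.log (max C 1) := by
        push_cast
        rw [Real.log_pow]
      calc Real.log (sepNum (⇑fHomeo) K N r) ≤ _ := h2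
        _ = N * Real.log (max C 1) := h3
        _ = Real.log (max C 1) * N := by ring

lemma slice_in_K {ε : ℝ} (n : ℕ) (hn : ((n:ℝ) + 1)⁻¹ ≤ ε) (s : ℤ → Bool) :
    ∀ i : ℤ, ziter fHomeo i (Pt n s) ∈ nbd ε ({p0} : Set ↥XsSet) := by
  intro i
  have hz : ziter fHomeo i (Pt n s) ∈ sliceSet n := slice_ziter n ⟨s, rfl⟩ i
  obtain ⟨t, ht⟩ := hz
  show infDist _ _ ≤ ε
  rw [infDist_singleton, Subtype.dist_eq, ht]
  show dist (slicePt n t) ((0:ℝ),(0:ℝ)) ≤ ε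
  rw [dist_comm, dist_zero_slice]
  exact hn


end St17

theorem stmt_17 :
    ∃ (Xs : Set (ℝ × ℝ)), Xs ⊆ Set.Icc ((0 : ℝ), (0 : ℝ)) (1, 1) ∧ IsCompact Xs ∧
      ∃ (h0 : ((0 : ℝ), (0 : ℝ)) ∈ Xs) (f : Xs ≃ₜ Xs),
        f ⟨((0 : ℝ), (0 : ℝ)), h0⟩ = ⟨((0 : ℝ), (0 : ℝ)), h0⟩ ∧
        (∃ e > 0, ExpConstOn f ({⟨((0 : ℝ), (0 : ℝ)), h0⟩} : Set Xs) e) ∧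
        (∀ ε > 0, Real.log 2 ≤
          htop ⇑f {y : Xs | ∀ i : ℤ, ziter f i y ∈ nbd ε ({⟨((0 : ℝ), (0 : ℝ)), h0⟩} : Set Xs)}) ∧
        SenOn ⇑f ({⟨((0 : ℝ), (0 : ℝ)), h0⟩} : Set Xs) = ∅ := by
  refine ⟨St17.XsSet, St17.Xs_subset_Icc, St17.Xs_compact, St17.origin_mem, St17.fHomeo,
    ?_, ?_, ?_, ?_⟩
  · exact Subtype.ext (by rw [St17.fHomeo_apply]; exact St17.fmap_zero)
  · refine ⟨1, one_pos, fun x y hx hy _ => ?_⟩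
    have hx0 := hx 0
    have hy0 := hy 0
    simp only [ziter, le_refl, if_true, Int.toNat_zero, Function.iterate_zero, id_eq,
      Set.mem_singleton_iff] at hx0 hy0
    rw [hx0, hy0]
  · intro ε hε
    obtain ⟨n, hn⟩ := exists_nat_gt (1 / ε)
    have hn' : ((n:ℝ) + 1)⁻¹ ≤ ε := by
      rw [inv_eq_one_div, div_le_iff₀ (by positivity)]
      have h2 : (1:ℝ) < ((n:ℝ) + 1) * ε := by
        rw [div_lt_iff₀ hε] at hn
        nlinarith
      linarith
    set K := {y : ↥St17.XsSet | ∀ i : ℤ,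
      ziter St17.fHomeo i y ∈ nbd ε ({⟨((0 : ℝ), (0 : ℝ)), St17.origin_mem⟩} : Set ↥St17.XsSet)}
      with hKdef
    have hK : ∀ s : ℤ → Bool, St17.Pt n s ∈ K := fun s i => St17.slice_in_K n hn' s i
    have hbdd : BddAbove (Set.range fun r : {r : ℝ // 0 < r} =>
        entAt (⇑St17.fHomeo) K r) := by
      refine ⟨2 * Real.log 55 + 1, ?_⟩
      rintro _ ⟨r, rfl⟩
      exact St17.entAt_unif_bound K r.2
    have h1 : Real.log 2 ≤ entAt (⇑St17.fHomeo) K ((4:ℝ)⁻¹ * ((n:ℝ) + 1)⁻¹) :=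
      St17.entAt_lower K n hK
    have h2 : entAt (⇑St17.fHomeo) K ((4:ℝ)⁻¹ * ((n:ℝ) + 1)⁻¹) ≤
        ⨆ r : {r : ℝ // 0 < r}, entAt (⇑St17.fHomeo) K r :=
      le_ciSup hbdd ⟨(4:ℝ)⁻¹ * ((n:ℝ) + 1)⁻¹, by positivity⟩
    exact le_trans h1 h2
  · ext x
    simp only [SenOn, Set.mem_setOf_eq, Set.mem_empty_iff_false, iff_false]
    rintro ⟨hxS, a, ha, hprop⟩
    obtain ⟨y, hy, -, i, hi⟩ := hprop 1 one_pos
    rw [Set.mem_singleton_iff] at hxS hy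
    rw [hxS, hy, dist_self] at hi
    linarith
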